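/- Suppose a rate function satisfies r(h) → ∞/h superlinearly, i.e. lim_{h→∞} r(h)/h = ∞, where r(h) = -log π(h) for a probability sequence π(h), and set L_h = ⌈5β·e^{r(h)}⌉. Then the set B = ⋃_{h≥1} ℕ ∩ [3L_h/4, L_h] satisfies Σ_{k∈B∩[1,n]} 1/k = o(log n). -/

import Mathlib

open Filter

/-- Union bound for finite sums of a nonnegative function. -/
lemma aux_sum_biUnion_le (s : Finset ℕ) (t : ℕ → Finset ℕ) (f : ℕ → ℝ)
    (hf : ∀ x, 0 ≤ f x) :
    ∑ x ∈ s.biUnion t, f x ≤ ∑ i ∈ s, ∑ x ∈ t i, f x := by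
  classical
  induction s using Finset.induction_on with
  | empty => simp
  | insert _ _ hi ih =>
    rename_i a s
    rw [Finset.biUnion_insert, Finset.sum_insert hi]
    have hsplit : t a ∪ s.biUnion t = t a ∪ (s.biUnion t \ t a) := by
      rw [Finset.union_sdiff_self_eq_union]
    rw [hsplit, Finset.sum_union Finset.disjoint_sdiff]
    have h1 : ∑ x ∈ s.biUnion t \ t a, f x ≤ ∑ x ∈ s.biUnion t, f x :=
      Finset.sum_le_sum_of_subset_of_nonneg (Finset.sdiff_subset) (fun x _ _ => hf x)
    linarith [ih]

/-- Each interval `[3L/4, L]` contributes at most `3` to the harmonic sum. -/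
lemma aux_interval_bound (L n : ℕ) :
    ∑ k ∈ (Finset.Icc 1 n).filter (fun k => k ∈ Set.Icc (3 * L / 4) L),
      (1 : ℝ) / k ≤ 3 := by
  classical
  set a := max 1 (3 * L / 4) with ha
  have ha1 : 1 ≤ a := le_max_left _ _
  have ha2 : 3 * L / 4 ≤ a := le_max_right _ _
  have hsub : (Finset.Icc 1 n).filter (fun k => k ∈ Set.Icc (3 * L / 4) L)
      ⊆ Finset.Icc a L := by
    intro k hk
    simp only [Finset.mem_filter, Finset.mem_Icc, Set.mem_Icc] at hk ⊢
    exact ⟨max_le hk.1.1 hk.2.1, hk.2.2⟩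
  have hapos : (0 : ℝ) < a := by exact_mod_cast ha1
  calc ∑ k ∈ (Finset.Icc 1 n).filter (fun k => k ∈ Set.Icc (3 * L / 4) L), (1 : ℝ) / k
      ≤ ∑ k ∈ Finset.Icc a L, (1 : ℝ) / k := by
        apply Finset.sum_le_sum_of_subset_of_nonneg hsub
        intro k hk _
        positivity
    _ ≤ ∑ _k ∈ Finset.Icc a L, (1 : ℝ) / a := by
        apply Finset.sum_le_sum
        intro k hk
        have hk1 : (a : ℝ) ≤ k := by exact_mod_cast (Finset.mem_Icc.1 hk).1
        exact one_div_le_one_div_of_le hapos hk1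
    _ = ((Finset.Icc a L).card : ℝ) * (1 / a) := by
        rw [Finset.sum_const, nsmul_eq_mul]
    _ ≤ (3 * a : ℝ) * (1 / a) := by
        apply mul_le_mul_of_nonneg_right _ (by positivity)
        have hcard : (Finset.Icc a L).card ≤ 3 * a := by
          rw [Nat.card_Icc]; omega
        exact_mod_cast hcard
    _ = 3 := by field_simp

/-- If `r(h) = -log π(h)` for a probability sequence `π(h)` is superlinear
(`r(h)/h → ∞`), and `L_h = ⌈5β e^{r(h)}⌉`, then `B = ⋃_{h≥1} ℕ ∩ [3L_h/4, L_h]` satisfies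
`Σ_{k ∈ B ∩ [1,n]} 1/k = o(log n)`. -/
theorem exceptional_set_zero_log_density_abstract (β : ℝ) (hβ : 0 < β)
    (π : ℕ → ℝ) (r : ℕ → ℝ)
    (hπ : ∀ h, 0 < π h ∧ π h ≤ 1)
    (hr : ∀ h, r h = -Real.log (π h))
    (hsuper : Tendsto (fun h : ℕ => r h / h) atTop atTop)
    (Lh : ℕ → ℕ) (hLh : ∀ h, Lh h = ⌈5 * β * Real.exp (r h)⌉₊)
    (B : Set ℕ) (hB : B = ⋃ h ≥ 1, Set.Icc (3 * Lh h / 4) (Lh h)) :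
    Tendsto (fun n : ℕ =>
        (∑ k ∈ Finset.Icc 1 n, Set.indicator B (fun k => 1 / (k : ℝ)) k) / Real.log n)
      atTop (nhds 0) := by
  classical
  -- abbreviate the partial sums
  set S : ℕ → ℝ := fun n => ∑ k ∈ Finset.Icc 1 n, Set.indicator B (fun k => 1 / (k : ℝ)) k
    with hS
  have hSnonneg : ∀ n, 0 ≤ S n := by
    intro n
    apply Finset.sum_nonneg
    intro k _
    exact Set.indicator_nonneg (fun x _ => by positivity) k
  -- rewrite S as a filtered sum
  have hSfilter : ∀ n, S n = ∑ k ∈ (Finset.Icc 1 n).filter (fun k => k ∈ B), (1 : ℝ) / k := by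
    intro n
    rw [hS, Finset.sum_filter]
    apply Finset.sum_congr rfl
    intro k _
    rw [Set.indicator_apply]
  -- log of n tends to infinity
  have hlogtop : Tendsto (fun n : ℕ => Real.log n) atTop atTop :=
    Real.tendsto_log_atTop.comp tendsto_natCast_atTop_atTop
  rw [NormedAddCommGroup.tendsto_nhds_zero]
  intro ε hε
  -- choose M so that 3/M = ε/2
  set M : ℝ := 6 / ε with hM
  have hMpos : 0 < M := by positivity
  -- superlinearity : beyond h₀ we have r h ≥ M h
  obtain ⟨h₀, hh₀⟩ := (hsuper.eventually (eventually_ge_atTop M)).exists_forall_of_atTop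
  set A : ℕ := max h₀ 1 with hA
  set c : ℝ := Real.log 3 - Real.log (5 * β) with hc
  -- the key counting bound : active indices h are at most K n
  set K : ℕ → ℕ := fun n => max A ⌈(Real.log n + c) / M⌉₊ with hK
  -- main pointwise bound : S n ≤ 3 * K n
  have hmain : ∀ n : ℕ, S n ≤ 3 * K n := by
    intro n
    rw [hSfilter]
    have hsub : (Finset.Icc 1 n).filter (fun k => k ∈ B) ⊆
        (Finset.Icc 1 (K n)).biUnion (fun h =>
          (Finset.Icc 1 n).filter (fun k => k ∈ Set.Icc (3 * Lh h / 4) (Lh h))) := by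
      intro k hk
      rw [Finset.mem_filter] at hk
      obtain ⟨hk1, hk2⟩ := hk
      rw [hB] at hk2
      simp only [Set.mem_iUnion, exists_prop] at hk2
      obtain ⟨h, hh1, hhk⟩ := hk2
      rw [Finset.mem_biUnion]
      refine ⟨h, ?_, Finset.mem_filter.2 ⟨hk1, hhk⟩⟩
      rw [Finset.mem_Icc]
      refine ⟨hh1, ?_⟩
      -- show h ≤ K n
      by_cases hcase : h ≤ A
      · exact le_trans hcase (le_max_left _ _)
      · push_neg at hcase
        have hhA : h₀ ≤ h := le_trans (le_max_left _ _) hcase.le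
        have hhpos : (0 : ℝ) < h := by
          have : 1 ≤ h := le_trans (le_max_right _ _) hcase.le
          exact_mod_cast this
        have hrh : M * h ≤ r h := by
          have := hh₀ h hhA
          calc M * h ≤ r h / h * h := by
                apply mul_le_mul_of_nonneg_right this hhpos.le
            _ = r h := by field_simp
        -- k ∈ [1, n] and k ≥ 3 Lh h / 4 gives Lh h ≤ 3 n
        have hk1' := Finset.mem_Icc.1 hk1
        have hset := Set.mem_Icc.1 hhk
        have hLle : Lh h ≤ 3 * n := by omega
        have hLge : 5 * β * Real.exp (M * h) ≤ (Lh h : ℝ) := by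
          calc 5 * β * Real.exp (M * h) ≤ 5 * β * Real.exp (r h) := by
                apply mul_le_mul_of_nonneg_left (Real.exp_le_exp.2 hrh) (by positivity)
            _ ≤ (Lh h : ℝ) := by rw [hLh h]; exact Nat.le_ceil _
        have hexp : Real.exp (M * h) ≤ 3 * n / (5 * β) := by
          rw [le_div_iff₀ (by positivity)]
          calc Real.exp (M * h) * (5 * β) = 5 * β * Real.exp (M * h) := by ring
            _ ≤ (Lh h : ℝ) := hLge
            _ ≤ 3 * n := by exact_mod_cast hLle
        have hnpos : (0 : ℝ) < n := by
          have : 1 ≤ n := le_trans hk1'.1 hk1'.2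
          exact_mod_cast this
        have hlog : M * h ≤ Real.log n + c := by
          have h1 : M * h ≤ Real.log (3 * n / (5 * β)) := by
            have := Real.log_le_log (Real.exp_pos _) hexp
            rwa [Real.log_exp] at this
          have h2 : Real.log (3 * n / (5 * β)) = Real.log n + c := by
            rw [hc, Real.log_div (by positivity) (by positivity),
              Real.log_mul (by norm_num) (by positivity)]
            ring
          linarith [h1, h2.symm.le]
        have hhle : (h : ℝ) ≤ (Real.log n + c) / M := by
          rw [le_div_iff₀ hMpos]
          calc (h : ℝ) * M = M * h := by ring
            _ ≤ Real.log n + c := hlog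
        have : h ≤ ⌈(Real.log n + c) / M⌉₊ := by
          have := Nat.ceil_le_ceil (R := ℝ) hhle
          rwa [Nat.ceil_natCast] at this
        exact le_trans this (le_max_right _ _)
    calc ∑ k ∈ (Finset.Icc 1 n).filter (fun k => k ∈ B), (1 : ℝ) / k
        ≤ ∑ k ∈ (Finset.Icc 1 (K n)).biUnion (fun h =>
            (Finset.Icc 1 n).filter (fun k => k ∈ Set.Icc (3 * Lh h / 4) (Lh h))),
            (1 : ℝ) / k := by
          apply Finset.sum_le_sum_of_subset_of_nonneg hsub
          intro k _ _; positivity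
      _ ≤ ∑ h ∈ Finset.Icc 1 (K n), ∑ k ∈ (Finset.Icc 1 n).filter
            (fun k => k ∈ Set.Icc (3 * Lh h / 4) (Lh h)), (1 : ℝ) / k := by
          apply aux_sum_biUnion_le
          intro x; positivity
      _ ≤ ∑ _h ∈ Finset.Icc 1 (K n), (3 : ℝ) := by
          apply Finset.sum_le_sum
          intro h _
          exact aux_interval_bound (Lh h) n
      _ ≤ 3 * K n := by
          rw [Finset.sum_const, nsmul_eq_mul, Nat.card_Icc]
          have : (K n + 1 - 1 : ℕ) = K n := by omega
          rw [this]; ring_nf; exact le_refl _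
  -- now the asymptotic estimate
  set C₀ : ℝ := 3 * A + 3 + 3 * |c| / M with hC₀
  have hC₀nonneg : 0 ≤ C₀ := by positivity
  have hev : ∀ᶠ n : ℕ in atTop,
      Real.log n ≥ max (max 1 (|c| + 1)) (2 * C₀ / ε + 1) :=
    hlogtop.eventually_ge_atTop _
  filter_upwards [hev] with n hn
  have hlog1 : 1 ≤ Real.log n := le_trans (le_trans (le_max_left _ _) (le_max_left _ _)) hn
  have hlogc : |c| ≤ Real.log n := by
    have := le_trans (le_trans (le_max_right _ _) (le_max_left _ _)) hn
    linarith
  have hlogC : 2 * C₀ / ε + 1 ≤ Real.log n := le_trans (le_max_right _ _) hn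
  have hlogpos : 0 < Real.log n := lt_of_lt_of_le one_pos hlog1
  -- bound K n
  have hx : 0 ≤ (Real.log n + c) / M := by
    apply div_nonneg _ hMpos.le
    have : -|c| ≤ c := neg_abs_le c
    linarith
  have hceil : (⌈(Real.log n + c) / M⌉₊ : ℝ) ≤ (Real.log n + c) / M + 1 :=
    (Nat.ceil_lt_add_one hx).le
  have hKbound : (K n : ℝ) ≤ A + ((Real.log n + c) / M + 1) := by
    rw [hK]
    have : (max A ⌈(Real.log n + c) / M⌉₊ : ℕ) ≤ A + ⌈(Real.log n + c) / M⌉₊ := by omega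
    calc ((max A ⌈(Real.log n + c) / M⌉₊ : ℕ) : ℝ)
        ≤ ((A + ⌈(Real.log n + c) / M⌉₊ : ℕ) : ℝ) := by exact_mod_cast this
      _ = (A : ℝ) + (⌈(Real.log n + c) / M⌉₊ : ℝ) := by push_cast; ring
      _ ≤ A + ((Real.log n + c) / M + 1) := by linarith
  have hdivM : (Real.log n + c) / M ≤ Real.log n / M + |c| / M := by
    rw [add_div]
    gcongr
    exact le_abs_self c
  have h3K : 3 * (K n : ℝ) ≤ C₀ + (ε / 2) * Real.log n := by
    have hM3 : 3 / M = ε / 2 := by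
      rw [hM]; field_simp; ring
    have : 3 * Real.log n / M = (ε / 2) * Real.log n := by
      rw [mul_comm (ε / 2), mul_div_assoc, ← hM3]; ring
    calc 3 * (K n : ℝ) ≤ 3 * (A + ((Real.log n + c) / M + 1)) := by linarith
      _ ≤ 3 * (A + (Real.log n / M + |c| / M + 1)) := by linarith
      _ = C₀ + 3 * Real.log n / M := by rw [hC₀]; ring
      _ = C₀ + (ε / 2) * Real.log n := by rw [this]
  have hfinal : S n / Real.log n < ε := by
    rw [div_lt_iff₀ hlogpos]
    have hC₀small : C₀ < (ε / 2) * Real.log n := by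
      have h1 : 2 * C₀ / ε < Real.log n := by linarith
      have h2 : 2 * C₀ / ε * (ε / 2) < Real.log n * (ε / 2) := by
        apply mul_lt_mul_of_pos_right h1 (by positivity)
      have h3 : 2 * C₀ / ε * (ε / 2) = C₀ := by field_simp
      linarith
    calc S n ≤ 3 * (K n : ℝ) := hmain n
      _ ≤ C₀ + (ε / 2) * Real.log n := h3K
      _ < (ε / 2) * Real.log n + (ε / 2) * Real.log n := by linarith
      _ = ε * Real.log n := by ring
  have habs : ‖S n / Real.log n‖ = S n / Real.log n := by
    rw [Real.norm_eq_abs, abs_of_nonneg (div_nonneg (hSnonneg n) hlogpos.le)]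
  rw [habs]
  exact hfinal
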